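/- Under the assumptions: Σ a p×p correlation matrix with coherence γ ≤ ω₀/(2k̄) (0 ≤ ω₀ < 1, k̄ ≥ k ≥ 1), S ⊆ {1,…,p} with |S| = k, β ∈ R^p with ‖β_{S^c}‖_∞ ≤ σν·ln and ‖β_{S^c}‖₁ ≤ ση·ln where ln = √((2 log p)/n), the conditional covariance action satisfies ‖Σ_{S^c|S} β_{S^c}‖_∞ ≤ σ(ν + ω₀·η/k̄)·ln, where Σ_{S^c|S} = Σ_{S^cS^c} − Σ_{S^cS} Σ_{SS}^{-1} Σ_{SS^c}. -/

import Mathlib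

open Matrix Finset

/-- ℓ∞ bound on `C⁻¹.mulVec v` for a matrix with unit diagonal whose off-diagonal
row sums are at most `1/2`. -/
lemma inv_mulVec_linf_bound {m : Type*} [Fintype m] [DecidableEq m] [Nonempty m]
    (C : Matrix m m ℝ)
    (hdom : ∀ s, ∑ t ∈ Finset.univ.erase s, |C s t| ≤ 1 / 2)
    (hCd : ∀ s, C s s = 1)
    (v : m → ℝ) (Bv : ℝ) (hv : ∀ s, |v s| ≤ Bv) :
    ∀ s, |(C⁻¹.mulVec v) s| ≤ 2 * Bv := by
  have hdet : IsUnit C.det := by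
    refine Ne.isUnit ?_
    apply det_ne_zero_of_sum_row_lt_diag
    intro s
    simp only [Real.norm_eq_abs, hCd s, abs_one]
    exact lt_of_le_of_lt (hdom s) (by norm_num)
  set u := C⁻¹.mulVec v with hu
  have hCu : C.mulVec u = v := by
    rw [hu, Matrix.mulVec_mulVec, Matrix.mul_nonsing_inv C hdet, Matrix.one_mulVec]
  obtain ⟨s₀, -, hs₀⟩ := Finset.exists_mem_eq_sup' Finset.univ_nonempty (fun s => |u s|)
  have hmax : ∀ s, |u s| ≤ |u s₀| := fun s => hs₀ ▸ Finset.le_sup' (fun s => |u s|) (Finset.mem_univ s)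
  have hv0 : v s₀ = ∑ t, C s₀ t * u t := by
    rw [← hCu]; rfl
  have hus : u s₀ = v s₀ - ∑ t ∈ Finset.univ.erase s₀, C s₀ t * u t := by
    rw [hv0, ← Finset.add_sum_erase _ _ (Finset.mem_univ s₀), hCd s₀, one_mul]; ring
  have hsum : |∑ t ∈ Finset.univ.erase s₀, C s₀ t * u t| ≤ (1/2) * |u s₀| := by
    calc |∑ t ∈ Finset.univ.erase s₀, C s₀ t * u t|
        ≤ ∑ t ∈ Finset.univ.erase s₀, |C s₀ t * u t| := Finset.abs_sum_le_sum_abs _ _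
      _ ≤ ∑ t ∈ Finset.univ.erase s₀, |C s₀ t| * |u s₀| := by
          refine Finset.sum_le_sum fun t _ => ?_
          rw [abs_mul]
          exact mul_le_mul_of_nonneg_left (hmax t) (abs_nonneg _)
      _ = (∑ t ∈ Finset.univ.erase s₀, |C s₀ t|) * |u s₀| := by rw [Finset.sum_mul]
      _ ≤ (1/2) * |u s₀| := mul_le_mul_of_nonneg_right (hdom s₀) (abs_nonneg _)
  have key : |u s₀| ≤ 2 * Bv := by
    have h1 : |u s₀| ≤ |v s₀| + (1/2) * |u s₀| := by
      calc |u s₀| ≤ |v s₀| + |∑ t ∈ Finset.univ.erase s₀, C s₀ t * u t| := by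
            rw [hus]; exact abs_sub _ _
        _ ≤ |v s₀| + (1/2) * |u s₀| := by linarith [hsum]
    have := hv s₀
    linarith
  exact fun s => le_trans (hmax s) key


/-- Under incoherence `γ(Σ) ≤ ω₀ / (2 k̄)` (`0 ≤ ω₀ < 1`, `k̄ ≥ k ≥ 1`), `|S| = k`,
`‖β_{Sᶜ}‖_∞ ≤ σ ν ln` and `‖β_{Sᶜ}‖₁ ≤ σ η ln` with `ln = √((2 log p)/n)`, the Schur
complement `M_{Sᶜ|S} = M_{SᶜSᶜ} − M_{SᶜS} M_{SS}⁻¹ M_{SSᶜ}` satisfies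
`‖M_{Sᶜ|S} β_{Sᶜ}‖_∞ ≤ σ (ν + ω₀ η / k̄) ln`. -/
theorem linf_bound_schur_complement_action {p n k kbar : ℕ}
    (M : Matrix (Fin p) (Fin p) ℝ) (γ ω₀ σ η ν : ℝ)
    (hsym : M.IsSymm) (hpsd : M.PosSemidef) (hdiag : ∀ j, M j j = 1)
    (hγ : ∀ i j, i ≠ j → |M i j| ≤ γ)
    (hω₀ : 0 ≤ ω₀) (hω₁ : ω₀ < 1) (hk : 1 ≤ k) (hkbar : k ≤ kbar)
    (hcoh : γ ≤ ω₀ / (2 * kbar)) (hη : 0 ≤ η) (hν : 0 ≤ ν)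
    (S : Finset (Fin p)) (hS : S.card = k) (β : Fin p → ℝ)
    (hβ1 : ∑ j ∈ Sᶜ, |β j| ≤ σ * η * Real.sqrt (2 * Real.log p / n))
    (hβinf : ∀ j ∈ Sᶜ, |β j| ≤ σ * ν * Real.sqrt (2 * Real.log p / n)) :
    ∀ i : ↥(Sᶜ : Finset (Fin p)),
      |((M.submatrix (fun i : ↥(Sᶜ : Finset (Fin p)) => (i : Fin p))
            (fun j : ↥(Sᶜ : Finset (Fin p)) => (j : Fin p)) -
          M.submatrix (fun i : ↥(Sᶜ : Finset (Fin p)) => (i : Fin p))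
            (fun j : S => (j : Fin p)) *
          (M.submatrix (fun i : S => (i : Fin p)) (fun j : S => (j : Fin p)))⁻¹ *
          M.submatrix (fun i : S => (i : Fin p))
            (fun j : ↥(Sᶜ : Finset (Fin p)) => (j : Fin p))).mulVec
          (fun j : ↥(Sᶜ : Finset (Fin p)) => β (j : Fin p))) i| ≤
        σ * (ν + ω₀ * η / kbar) * Real.sqrt (2 * Real.log p / n) := by
  classical
  set L := Real.sqrt (2 * Real.log p / n) with hL
  set A := σ * ν * L with hA
  set B := σ * η * L with hB
  set Sc := (Sᶜ : Finset (Fin p)) with hSc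
  intro i
  have hB0 : (0:ℝ) ≤ B := le_trans (Finset.sum_nonneg fun j _ => abs_nonneg _) hβ1
  have hSne : S.Nonempty := Finset.card_pos.mp (hS ▸ hk)
  obtain ⟨s₁, hs₁⟩ := hSne
  have hiS : (i : Fin p) ∉ S := Finset.mem_compl.mp i.2
  have hγ0 : 0 ≤ γ :=
    le_trans (abs_nonneg _) (hγ i s₁ (fun h => hiS (by rw [h]; exact hs₁)))
  have hkb1 : (1:ℝ) ≤ (kbar : ℝ) := by exact_mod_cast le_trans hk hkbar
  have hkb0 : (0:ℝ) < (kbar : ℝ) := lt_of_lt_of_le one_pos hkb1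
  have hkk : (k:ℝ) ≤ (kbar:ℝ) := by exact_mod_cast hkbar
  have hk0 : (0:ℝ) ≤ (k:ℝ) := Nat.cast_nonneg k
  have hγk : γ * k ≤ ω₀ / 2 := by
    calc γ * k ≤ (ω₀ / (2 * kbar)) * k := mul_le_mul_of_nonneg_right hcoh hk0
      _ ≤ ω₀ / 2 := by
          rw [div_mul_eq_mul_div, div_le_div_iff₀ (by positivity) two_pos]
          nlinarith
  have h2γ : 2 * γ ≤ ω₀ / kbar := by
    have : 2 * (ω₀ / (2 * kbar)) = ω₀ / kbar := by field_simp
    linarith [this ▸ (by linarith : 2 * γ ≤ 2 * (ω₀ / (2 * kbar)))]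
  -- abbreviations
  set x : ↥Sc → ℝ := fun j => β (j : Fin p) with hx
  have hsumx : ∑ j : ↥Sc, |x j| ≤ B := by
    rw [hx]
    calc ∑ j : ↥Sc, |β (j : Fin p)| = ∑ j ∈ Sc, |β j| :=
          Finset.sum_coe_sort Sc (fun j => |β j|)
      _ ≤ B := hβ1
  have hxinf : ∀ j : ↥Sc, |x j| ≤ A := fun j => hβinf _ j.2
  set Am := M.submatrix (fun i : ↥Sc => (i : Fin p)) (fun j : ↥Sc => (j : Fin p)) with hAm
  set Bm := M.submatrix (fun i : ↥Sc => (i : Fin p)) (fun j : S => (j : Fin p)) with hBm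
  set Cm := M.submatrix (fun i : S => (i : Fin p)) (fun j : S => (j : Fin p)) with hCm
  set Dm := M.submatrix (fun i : S => (i : Fin p)) (fun j : ↥Sc => (j : Fin p)) with hDm
  have hScard : Fintype.card ↥S = k := by rw [Fintype.card_coe, hS]
  haveI : Nonempty ↥S := ⟨⟨s₁, hs₁⟩⟩
  -- the vector v = Dm.mulVec x
  set v := Dm.mulVec x with hv
  have hvB : ∀ s : ↥S, |v s| ≤ γ * B := by
    intro s
    have hne : ∀ j : ↥Sc, (s : Fin p) ≠ (j : Fin p) := by
      intro j h
      exact (Finset.mem_compl.mp j.2) (h ▸ s.2)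
    calc |v s| = |∑ j : ↥Sc, M (s : Fin p) (j : Fin p) * x j| := rfl
      _ ≤ ∑ j : ↥Sc, |M (s : Fin p) (j : Fin p) * x j| := Finset.abs_sum_le_sum_abs _ _
      _ ≤ ∑ j : ↥Sc, γ * |x j| := by
          refine Finset.sum_le_sum fun j _ => ?_
          rw [abs_mul]
          exact mul_le_mul_of_nonneg_right (hγ _ _ (hne j)) (abs_nonneg _)
      _ = γ * ∑ j : ↥Sc, |x j| := by rw [Finset.mul_sum]
      _ ≤ γ * B := mul_le_mul_of_nonneg_left hsumx hγ0
  -- bound on u = Cm⁻¹.mulVec v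
  have hdom : ∀ s : ↥S, ∑ t ∈ Finset.univ.erase s, |Cm s t| ≤ 1 / 2 := by
    intro s
    calc ∑ t ∈ Finset.univ.erase s, |Cm s t|
        ≤ ∑ _t ∈ Finset.univ.erase s, γ := by
          refine Finset.sum_le_sum fun t ht => ?_
          exact hγ _ _ (fun h => (Finset.mem_erase.mp ht).1 (Subtype.coe_injective h).symm)
      _ = ((Finset.univ.erase s).card : ℝ) * γ := by
          rw [Finset.sum_const, nsmul_eq_mul]
      _ ≤ (k : ℝ) * γ := by
          refine mul_le_mul_of_nonneg_right ?_ hγ0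
          have : (Finset.univ.erase s).card ≤ Finset.univ.card := Finset.card_le_card (Finset.erase_subset _ _)
          have h2 : (Finset.univ : Finset ↥S).card = k := by rw [Finset.card_univ, hScard]
          exact_mod_cast h2 ▸ this
      _ ≤ 1 / 2 := by nlinarith
  have hCd : ∀ s : ↥S, Cm s s = 1 := fun s => hdiag _
  have huB : ∀ s : ↥S, |(Cm⁻¹.mulVec v) s| ≤ 2 * (γ * B) :=
    inv_mulVec_linf_bound Cm hdom hCd v (γ * B) hvB
  set u := Cm⁻¹.mulVec v with hu
  -- decompose
  have hdecomp : ((Am - Bm * Cm⁻¹ * Dm).mulVec x) i = (Am.mulVec x) i - (Bm.mulVec u) i := by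
    rw [Matrix.sub_mulVec, Pi.sub_apply, hu, hv, Matrix.mulVec_mulVec, Matrix.mulVec_mulVec]
  -- term 1
  have h1 : |(Am.mulVec x) i| ≤ A + γ * B := by
    have heq : (Am.mulVec x) i = x i + ∑ j ∈ Finset.univ.erase i, M (i : Fin p) (j : Fin p) * x j := by
      have : (Am.mulVec x) i = ∑ j : ↥Sc, M (i : Fin p) (j : Fin p) * x j := rfl
      rw [this, ← Finset.add_sum_erase _ _ (Finset.mem_univ i), hdiag, one_mul]
    rw [heq]
    have hb : |∑ j ∈ Finset.univ.erase i, M (i : Fin p) (j : Fin p) * x j| ≤ γ * B := by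
      calc |∑ j ∈ Finset.univ.erase i, M (i : Fin p) (j : Fin p) * x j|
          ≤ ∑ j ∈ Finset.univ.erase i, |M (i : Fin p) (j : Fin p) * x j| :=
            Finset.abs_sum_le_sum_abs _ _
        _ ≤ ∑ j ∈ Finset.univ.erase i, γ * |x j| := by
            refine Finset.sum_le_sum fun j hj => ?_
            rw [abs_mul]
            exact mul_le_mul_of_nonneg_right
              (hγ _ _ (fun h => (Finset.mem_erase.mp hj).1 (Subtype.coe_injective h).symm))
              (abs_nonneg _)
        _ ≤ ∑ j : ↥Sc, γ * |x j| := by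
            refine Finset.sum_le_sum_of_subset_of_nonneg (Finset.erase_subset _ _) ?_
            intro j _ _
            exact mul_nonneg hγ0 (abs_nonneg _)
        _ = γ * ∑ j : ↥Sc, |x j| := by rw [Finset.mul_sum]
        _ ≤ γ * B := mul_le_mul_of_nonneg_left hsumx hγ0
    calc |x i + ∑ j ∈ Finset.univ.erase i, M (i : Fin p) (j : Fin p) * x j|
        ≤ |x i| + |∑ j ∈ Finset.univ.erase i, M (i : Fin p) (j : Fin p) * x j| := abs_add_le _ _
      _ ≤ A + γ * B := add_le_add (hxinf i) hb
  -- term 2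
  have h2 : |(Bm.mulVec u) i| ≤ (k : ℝ) * (γ * (2 * (γ * B))) := by
    have hne : ∀ s : ↥S, (i : Fin p) ≠ (s : Fin p) := fun s h => hiS (by rw [h]; exact s.2)
    calc |(Bm.mulVec u) i| = |∑ s : ↥S, M (i : Fin p) (s : Fin p) * u s| := rfl
      _ ≤ ∑ s : ↥S, |M (i : Fin p) (s : Fin p) * u s| := Finset.abs_sum_le_sum_abs _ _
      _ ≤ ∑ _s : ↥S, γ * (2 * (γ * B)) := by
          refine Finset.sum_le_sum fun s _ => ?_
          rw [abs_mul]
          exact mul_le_mul (hγ _ _ (hne s)) (huB s) (abs_nonneg _) hγ0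
      _ = (k : ℝ) * (γ * (2 * (γ * B))) := by
          rw [Finset.sum_const, nsmul_eq_mul, Finset.card_univ, hScard]
  -- combine
  have hfinal : |((Am - Bm * Cm⁻¹ * Dm).mulVec x) i| ≤ A + γ * B + (k : ℝ) * (γ * (2 * (γ * B))) := by
    rw [hdecomp]
    calc |(Am.mulVec x) i - (Bm.mulVec u) i| ≤ |(Am.mulVec x) i| + |(Bm.mulVec u) i| := abs_sub _ _
      _ ≤ A + γ * B + (k : ℝ) * (γ * (2 * (γ * B))) := by linarith
  have harith : A + γ * B + (k : ℝ) * (γ * (2 * (γ * B))) ≤ A + (ω₀ / kbar) * B := by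
    nlinarith [mul_nonneg hγ0 hB0, mul_le_mul_of_nonneg_right h2γ hB0,
      mul_le_mul_of_nonneg_right hγk (mul_nonneg (mul_nonneg (by norm_num : (0:ℝ) ≤ 2) hγ0) hB0)]
  have hrhs : A + (ω₀ / kbar) * B = σ * (ν + ω₀ * η / kbar) * L := by
    rw [hA, hB]; ring
  calc |((Am - Bm * Cm⁻¹ * Dm).mulVec x) i| ≤ A + γ * B + (k : ℝ) * (γ * (2 * (γ * B))) := hfinal
    _ ≤ A + (ω₀ / kbar) * B := harith
    _ = σ * (ν + ω₀ * η / kbar) * L := hrhs
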